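/- For every κ ∈ ℂ with κ ≠ 0 and every s ∈ ℂ, setting g₁₁ = (1/2)tr(U₊(κ,s)²), g₂₂ = (1/2)tr((U₋ᵇ(κ))²), and g₁₂ = −(1/2)tr(U₊(κ,s)·E·U₋ᵇ(κ)), one has g₁₁·g₂₂ + g₁₂² = sin² s; in particular, the discriminant g₁₁g₂₂ + g₁₂² vanishes whenever s = 2kπ with k ∈ ℤ. -/

import Mathlib

open Matrix Complex
noncomputable def Esuper : Matrix (Fin 3) (Fin 3) ℂ := !![1, 0, 0; 0, 1, 0; 0, 0, -1]
noncomputable def Uplus (κ s : ℂ) : Matrix (Fin 3) (Fin 3) ℂ :=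
  !![0, 0, (I / (2 * κ)) * exp (I * s);
     0, 0, (-I / (2 * κ)) * exp (-(I * s));
     (-1 / (2 * κ)) * exp (-(I * s)), (1 / (2 * κ)) * exp (I * s), 0]
noncomputable def UminusB (κ : ℂ) : Matrix (Fin 3) (Fin 3) ℂ :=
  !![0, 0, -I * κ; 0, 0, I * κ; -κ, κ, 0]

theorem metric_discriminant_eq_sin_sq (κ s : ℂ) (hκ : κ ≠ 0) :
    let g₁₁ : ℂ := (1 / 2 : ℂ) * (Uplus κ s * Uplus κ s).trace
    let g₂₂ : ℂ := (1 / 2 : ℂ) * (UminusB κ * UminusB κ).trace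
    let g₁₂ : ℂ := -(1 / 2 : ℂ) * (Uplus κ s * Esuper * UminusB κ).trace
    g₁₁ * g₂₂ + g₁₂ ^ 2 = sin s ^ 2 ∧
    (∀ k : ℤ, s = 2 * (k : ℂ) * (Real.pi : ℂ) → g₁₁ * g₂₂ + g₁₂ ^ 2 = 0) := by
  intro g₁₁ g₂₂ g₁₂
  have key : g₁₁ * g₂₂ + g₁₂ ^ 2 = sin s ^ 2 := by
    show (1 / 2 : ℂ) * (Uplus κ s * Uplus κ s).trace * ((1 / 2 : ℂ) * (UminusB κ * UminusB κ).trace) + (-(1 / 2 : ℂ) * (Uplus κ s * Esuper * UminusB κ).trace) ^ 2 = sin s ^ 2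
    have hsin : sin s = (exp (-(I * s)) - exp (I * s)) * I / 2 := by
      rw [Complex.sin]; ring_nf
    simp only [Uplus, UminusB, Esuper, Matrix.mul_fin_three, Matrix.trace_fin_three_of, hsin]
    have hab : exp (I * s) * exp (-(I * s)) = 1 := by
      rw [← Complex.exp_add]; simp
    set a := exp (I * s); set b := exp (-(I * s))
    have hI : I ^ 2 = -1 := Complex.I_sq
    field_simp
    have hk2 : κ ^ 6 * κ⁻¹ ^ 4 = κ ^ 2 := by
      field_simp
    ring_nf
  refine ⟨key, fun k hk => ?_⟩
  rw [key, hk]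
  have : Complex.sin (2 * (k:ℂ) * Real.pi) = 0 := by
    rw [show (2 * (k:ℂ) * Real.pi) = ((2*k : ℤ):ℂ) * Real.pi by push_cast; ring]
    exact Complex.sin_int_mul_pi _
  rw [this]; ring
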